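/- In the constraints of the previous formulation, every non-null node lies on some directed path from the input node 1 to the output node V: for any i with z_i = 0, there is a directed path from 1 to V passing through i. -/

import Mathlib

open Finset

theorem nasbench_every_nonnull_node_on_path (n : ℕ)
    (m : Fin (n + 1) → Fin (n + 1) → ℤ) (z : Fin (n + 1) → ℤ)
    (hmbin : ∀ i j, m i j = 0 ∨ m i j = 1)
    (hzbin : ∀ i, z i = 0 ∨ z i = 1)
    (htri : ∀ i j : Fin (n + 1), ¬ i < j → m i j = 0)
    (hin0 : z 0 = 0) (houtV : z (Fin.last n) = 0)
    (hnullL : ∀ i j, m i j ≤ 1 - z i)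
    (hnullR : ∀ i j, m i j ≤ 1 - z j)
    (hflowin : ∀ j : Fin (n + 1), j ≠ 0 →
      1 - z j ≤ ∑ i ∈ univ.filter (fun i => i < j), m i j)
    (hflowout : ∀ i : Fin (n + 1), i ≠ Fin.last n →
      1 - z i ≤ ∑ j ∈ univ.filter (fun j => i < j), m i j) :
    ∀ v : Fin (n + 1), z v = 0 →
      ∃ (k : ℕ) (p : ℕ → Fin (n + 1)),
        p 0 = 0 ∧ p k = Fin.last n ∧
        (∀ t < k, m (p t) (p (t + 1)) = 1) ∧
        (∃ t ≤ k, p t = v) := by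
  have hedge_out : ∀ i : Fin (n+1), i ≠ Fin.last n → z i = 0 →
      ∃ j, i < j ∧ m i j = 1 ∧ z j = 0 := by
    intro i hi hz
    have h := hflowout i hi
    rw [hz] at h
    have hex : ∃ j ∈ univ.filter (fun j => i < j), m i j ≠ 0 := by
      by_contra hc
      push_neg at hc
      have h0 : ∑ j ∈ univ.filter (fun j => i < j), m i j = 0 :=
        Finset.sum_eq_zero hc
      omega
    obtain ⟨j, hj, hne⟩ := hex
    simp only [mem_filter, mem_univ, true_and] at hj
    have hm1 : m i j = 1 := (hmbin i j).resolve_left hne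
    refine ⟨j, hj, hm1, ?_⟩
    have hR := hnullR i j
    rcases hzbin j with h0 | h1
    · exact h0
    · omega
  have hedge_in : ∀ i : Fin (n+1), i ≠ 0 → z i = 0 →
      ∃ j, j < i ∧ m j i = 1 ∧ z j = 0 := by
    intro i hi hz
    have h := hflowin i hi
    rw [hz] at h
    have hex : ∃ j ∈ univ.filter (fun j => j < i), m j i ≠ 0 := by
      by_contra hc
      push_neg at hc
      have h0 : ∑ j ∈ univ.filter (fun j => j < i), m j i = 0 :=
        Finset.sum_eq_zero hc
      omega
    obtain ⟨j, hj, hne⟩ := hex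
    simp only [mem_filter, mem_univ, true_and] at hj
    have hm1 : m j i = 1 := (hmbin j i).resolve_left hne
    refine ⟨j, hj, hm1, ?_⟩
    have hL := hnullL j i
    rcases hzbin j with h0 | h1
    · exact h0
    · omega
  have forward : ∀ d : ℕ, ∀ i : Fin (n+1), n - i.val ≤ d → z i = 0 →
      ∃ k, ∃ p : ℕ → Fin (n+1), p 0 = i ∧ p k = Fin.last n ∧
        ∀ t < k, m (p t) (p (t+1)) = 1 := by
    intro d
    induction d with
    | zero =>
      intro i hd hz
      have hlt := i.isLt
      have : i = Fin.last n := by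
        apply Fin.ext
        simp only [Fin.val_last]
        omega
      exact ⟨0, fun _ => i, rfl, by rw [this], fun t ht => absurd ht (by omega)⟩
    | succ d ih =>
      intro i hd hz
      by_cases hi : i = Fin.last n
      · exact ⟨0, fun _ => i, rfl, by rw [hi], fun t ht => absurd ht (by omega)⟩
      obtain ⟨j, hij, hm, hzj⟩ := hedge_out i hi hz
      have hjd : n - j.val ≤ d := by
        have h1 : i.val < j.val := hij
        have := j.isLt
        omega
      obtain ⟨k, q, hq0, hqk, hqe⟩ := ih j hjd hzj
      refine ⟨k+1, fun t => if t = 0 then i else q (t-1), by simp, ?_, ?_⟩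
      · simp only [Nat.succ_ne_zero, if_false, Nat.add_sub_cancel]
        exact hqk
      intro t ht
      match t with
      | 0 =>
        simp only [if_pos rfl, Nat.one_ne_zero, if_false]
        simpa [hq0] using hm
      | Nat.succ t =>
        simp only [Nat.succ_ne_zero, if_false, Nat.add_sub_cancel, Nat.succ_sub_one]
        exact hqe t (by omega)
  have backward : ∀ d : ℕ, ∀ i : Fin (n+1), i.val ≤ d → z i = 0 →
      ∃ k, ∃ p : ℕ → Fin (n+1), p 0 = 0 ∧ p k = i ∧
        ∀ t < k, m (p t) (p (t+1)) = 1 := by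
    intro d
    induction d with
    | zero =>
      intro i hd hz
      have : i = 0 := by
        apply Fin.ext
        simpa using hd
      exact ⟨0, fun _ => i, by rw [this], rfl, fun t ht => absurd ht (by omega)⟩
    | succ d ih =>
      intro i hd hz
      by_cases hi : i = 0
      · exact ⟨0, fun _ => i, by rw [hi], rfl, fun t ht => absurd ht (by omega)⟩
      obtain ⟨j, hji, hm, hzj⟩ := hedge_in i hi hz
      have hjd : j.val ≤ d := by
        have h1 : j.val < i.val := hji
        omega
      obtain ⟨k, q, hq0, hqk, hqe⟩ := ih j hjd hzj
      refine ⟨k+1, fun t => if t ≤ k then q t else i, ?_, ?_, ?_⟩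
      · simp [hq0]
      · simp
      intro t ht
      by_cases htk : t < k
      · have h1 : t ≤ k := by omega
        have h2 : t + 1 ≤ k := by omega
        simp only [if_pos h1, if_pos h2]
        exact hqe t htk
      · have h1 : t = k := by omega
        subst h1
        simp only [le_refl, if_pos, Nat.lt_irrefl]
        have : ¬ (t + 1 ≤ t) := by omega
        rw [if_neg this, hqk]
        exact hm
  intro v hv
  obtain ⟨k1, p, hp0, hp1, hpe⟩ := backward v.val v le_rfl hv
  obtain ⟨k2, q, hq0, hq1, hqe⟩ := forward (n - v.val) v le_rfl hv
  refine ⟨k1 + k2, fun t => if t ≤ k1 then p t else q (t - k1), ?_, ?_, ?_, ?_⟩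
  · simp [hp0]
  · by_cases h : k2 = 0
    · subst h
      simp only [Nat.add_zero, le_refl, if_pos]
      rw [hp1, ← hq0]
      exact hq1
    · have h1 : ¬ (k1 + k2 ≤ k1) := by omega
      simp only [if_neg h1]
      simpa using hq1
  · intro t ht
    by_cases htk : t < k1
    · have h1 : t ≤ k1 := by omega
      have h2 : t + 1 ≤ k1 := by omega
      simp only [if_pos h1, if_pos h2]
      exact hpe t htk
    · by_cases hte : t = k1
      · subst hte
        have h2 : ¬ (t + 1 ≤ t) := by omega
        simp only [le_refl, if_pos, if_neg h2, Nat.add_sub_cancel_left]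
        rw [hp1, ← hq0]
        exact hqe 0 (by omega)
      · have h1 : ¬ (t ≤ k1) := by omega
        have h2 : ¬ (t + 1 ≤ k1) := by omega
        simp only [if_neg h1, if_neg h2]
        have h3 : t + 1 - k1 = (t - k1) + 1 := by omega
        rw [h3]
        exact hqe (t - k1) (by omega)
  · exact ⟨k1, by omega, by simp [hp1]⟩
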